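/- arXiv:1006.4928 — 4 statements merged into one kernel-verified Lean document; each statement's English description precedes it below -/
import Mathlib

section
/- Consider the splitting automaton on Z^d with d ≥ 1, background 1 − 1/(2d) ≤ h < 1 and initial mass n ≥ 1. Then the diamond D = {x ∈ ℝ^d : Σ_i |x_i| ≤ 1} is the limiting shape of the sets T_t with scaling function f(t) = 1/t: for every ε > 0 there exists t^ε such that for all t > t^ε, D_ε ⊆ (1/t)·(T_t + C) ⊆ D^ε. -/
open scoped BigOperators

/-- The nearest neighbor of `x ∈ ℤ^d` obtained by shifting coordinate `i` by `ε`. -/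
def nbr {d : ℕ} (x : Fin d → ℤ) (i : Fin d) (ε : ℤ) : Fin d → ℤ :=
  Function.update x i (x i + ε)

/-- Nearest-neighbor adjacency in `ℤ^d`. -/
def Adj {d : ℕ} (x y : Fin d → ℤ) : Prop :=
  (∑ i, |x i - y i|) = 1

/-- The splitting model on `ℤ^d` with initial mass `n` at the origin and background
mass `h` at every other site, together with a splitting order: `S (t+1)` is the set
of sites that split at time `t+1` (a subset of the sites unstable at time `t`,
i.e. those of mass `≥ 1`), and the mass `η` evolves by Zhang's toppling rule:
a splitting site loses all its mass, distributing a fraction `1/(2d)` of it to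
each of its `2d` nearest neighbors. -/
structure SplittingModel (d : ℕ) (n h : ℝ) where
  η : ℕ → (Fin d → ℤ) → ℝ
  S : ℕ → Set (Fin d → ℤ)
  init_origin : η 0 0 = n
  init_other : ∀ x : Fin d → ℤ, x ≠ 0 → η 0 x = h
  S_zero : S 0 = ∅
  S_subset : ∀ t, S (t + 1) ⊆ {x | 1 ≤ η t x}
  evolve : ∀ t x, η (t + 1) x =
      (S (t + 1))ᶜ.indicator (η t) x
        + (1 / (2 * (d : ℝ))) * ∑ i : Fin d,
            ((S (t + 1)).indicator (η t) (nbr x i 1)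
              + (S (t + 1)).indicator (η t) (nbr x i (-1)))

namespace SplittingModel

variable {d : ℕ} {n h : ℝ}

/-- A valid splitting order: some unstable site splits whenever there is an unstable
site, and every site that is unstable at some time eventually splits. -/
def Valid (M : SplittingModel d n h) : Prop :=
  (∀ t, {x | 1 ≤ M.η t x}.Nonempty → (M.S (t + 1)).Nonempty) ∧
    (∀ t x, 1 ≤ M.η t x → ∃ t₀, 1 ≤ t₀ ∧ x ∈ M.S (t + t₀))

/-- The parallel splitting order (the splitting automaton): at every time step,
every unstable site splits. -/
def Parallel (M : SplittingModel d n h) : Prop :=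
  ∀ t, M.S (t + 1) = {x | 1 ≤ M.η t x}

/-- The set of sites that split at least once up to (and including) time `t`. -/
def Tt (M : SplittingModel d n h) (t : ℕ) : Set (Fin d → ℤ) :=
  ⋃ t' ∈ Set.Icc 1 t, M.S t'

/-- The set of sites that split at least once. -/
def T (M : SplittingModel d n h) : Set (Fin d → ℤ) :=
  ⋃ t, M.S t

/-- The model stabilizes: every site splits only finitely many times. -/
def Stabilizes (M : SplittingModel d n h) : Prop :=
  ∀ x, {t | x ∈ M.S t}.Finite

/-- The total mass `u x` emitted from the site `x` during stabilization. -/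
noncomputable def emit (M : SplittingModel d n h) (x : Fin d → ℤ) : ℝ :=
  ∑' t : ℕ, (M.S (t + 1)).indicator (M.η t) x

end SplittingModel

open scoped Pointwise

/-- The volume `V + C ⊆ ℝ^d`, where `C` is the cube of radius `1/2` centered at the
origin: the union of unit cubes centered at the points of `V ⊆ ℤ^d`. -/
def cubes {d : ℕ} (V : Set (Fin d → ℤ)) : Set (EuclideanSpace ℝ (Fin d)) :=
  {p | ∃ x ∈ V, ∀ i, |p i - (x i : ℝ)| ≤ 1 / 2}

/-- The inner `ε`-neighborhood `A_ε` of a set `A ⊆ ℝ^d`. -/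
noncomputable def innerNbhd {d : ℕ} (A : Set (EuclideanSpace ℝ (Fin d))) (ε : ℝ) :
    Set (EuclideanSpace ℝ (Fin d)) :=
  {p ∈ A | ε ≤ Metric.infDist p Aᶜ}

/-- The outer `ε`-neighborhood `A^ε` of a set `A ⊆ ℝ^d`. -/
noncomputable def outerNbhd {d : ℕ} (A : Set (EuclideanSpace ℝ (Fin d))) (ε : ℝ) :
    Set (EuclideanSpace ℝ (Fin d)) :=
  {p | Metric.infDist p A ≤ ε}

/-- The diamond `D = {x ∈ ℝ^d : ∑ i, |x i| ≤ 1}`. -/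
def Diamond (d : ℕ) : Set (EuclideanSpace ℝ (Fin d)) :=
  {p | (∑ i, |p i|) ≤ 1}

def L1 {d : ℕ} (x : Fin d → ℤ) : ℤ := ∑ i, |x i|

lemma L1_nonneg {d : ℕ} (x : Fin d → ℤ) : 0 ≤ L1 x :=
  Finset.sum_nonneg fun _ _ => abs_nonneg _

lemma L1_zero {d : ℕ} (x : Fin d → ℤ) (hx : L1 x ≤ 0) : x = 0 := by
  have h0 : L1 x = 0 := le_antisymm hx (L1_nonneg x)
  funext i
  have := (Finset.sum_eq_zero_iff_of_nonneg (fun i _ => abs_nonneg (x i))).mp h0 i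
    (Finset.mem_univ i)
  simpa using abs_eq_zero.mp this

lemma L1_zero' {d : ℕ} : L1 (0 : Fin d → ℤ) = 0 := by simp [L1]

lemma sum_abs_update {d : ℕ} (p : Fin d → ℝ) (i : Fin d) (b : ℝ) :
    ∑ j, |Function.update p i b j| = (∑ j, |p j|) - |p i| + |b| := by
  have h1 : ∀ j, |Function.update p i b j| = Function.update (fun j => |p j|) i |b| j :=
    fun j => (Function.apply_update (fun _ y => |y|) p i b j)
  simp_rw [h1]
  rw [Finset.sum_update_of_mem (Finset.mem_univ i),
    ← Finset.sum_erase_add Finset.univ (fun j => |p j|) (Finset.mem_univ i),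
    show (Finset.univ \ {i} : Finset (Fin d)) = Finset.univ.erase i from by
      ext j; simp [Finset.mem_erase, and_comm]]
  ring

lemma L1_update {d : ℕ} (x : Fin d → ℤ) (i : Fin d) (b : ℤ) :
    L1 (Function.update x i b) = L1 x - |x i| + |b| := by
  unfold L1
  have h1 : ∀ j, |Function.update x i b j| = Function.update (fun j => |x j|) i |b| j :=
    fun j => (Function.apply_update (fun _ y => |y|) x i b j)
  simp_rw [h1]
  rw [Finset.sum_update_of_mem (Finset.mem_univ i),
    ← Finset.sum_erase_add Finset.univ (fun j => |x j|) (Finset.mem_univ i),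
    show (Finset.univ \ {i} : Finset (Fin d)) = Finset.univ.erase i from by
      ext j; simp [Finset.mem_erase, and_comm]]
  ring

lemma L1_nbr {d : ℕ} (x : Fin d → ℤ) (i : Fin d) (e : ℤ) (he : e = 1 ∨ e = -1) :
    L1 (nbr x i e) = L1 x + 1 ∨ L1 (nbr x i e) = L1 x - 1 := by
  have key : L1 (nbr x i e) = L1 x - |x i| + |x i + e| := L1_update x i _
  rcases abs_cases (x i + e) with ⟨h3, h4⟩ | ⟨h3, h4⟩ <;>
    rcases abs_cases (x i) with ⟨h5, h6⟩ | ⟨h5, h6⟩ <;>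
    rcases he with rfl | rfl <;> omega

lemma exists_dec {d : ℕ} (x : Fin d → ℤ) (hx : 1 ≤ L1 x) :
    ∃ i e, (e = 1 ∨ e = -1) ∧ L1 (nbr x i e) = L1 x - 1 := by
  have hex : ∃ i, x i ≠ 0 := by
    by_contra hc
    push_neg at hc
    have : x = 0 := funext fun i => hc i
    rw [this, L1_zero'] at hx; omega
  obtain ⟨i, hi⟩ := hex
  refine ⟨i, if 0 < x i then -1 else 1, by split <;> simp, ?_⟩
  have key : L1 (nbr x i (if 0 < x i then -1 else 1))
      = L1 x - |x i| + |x i + (if 0 < x i then -1 else 1)| := L1_update x i _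
  split_ifs at key ⊢ with hp
  · rcases abs_cases (x i + (-1)) with ⟨h3, h4⟩ | ⟨h3, h4⟩ <;>
      rcases abs_cases (x i) with ⟨h5, h6⟩ | ⟨h5, h6⟩ <;> omega
  · rcases abs_cases (x i + 1) with ⟨h3, h4⟩ | ⟨h3, h4⟩ <;>
      rcases abs_cases (x i) with ⟨h5, h6⟩ | ⟨h5, h6⟩ <;> omega

lemma eta_tri {d : ℕ} (hd : 1 ≤ d) {n h : ℝ}
    (hh1 : 1 - 1 / (2 * (d : ℝ)) ≤ h) (hh2 : h < 1) (hn : 1 ≤ n)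
    (M : SplittingModel d n h) (hM : M.Parallel) :
    ∀ (t : ℕ) (x : Fin d → ℤ),
      (((t : ℤ) < L1 x) → M.η t x = h) ∧
      ((L1 x ≤ (t : ℤ) ∧ L1 x % 2 = (t : ℤ) % 2) → 1 ≤ M.η t x) ∧
      ((L1 x ≤ (t : ℤ) ∧ L1 x % 2 ≠ (t : ℤ) % 2) → M.η t x = 0) := by
  have hdR : (1 : ℝ) ≤ d := by exact_mod_cast hd
  have hdpos : (0 : ℝ) < 2 * d := by linarith
  intro t
  induction t with
  | zero =>
    intro x
    refine ⟨?_, ?_, ?_⟩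
    · intro hx
      apply M.init_other
      intro h0
      rw [h0, L1_zero'] at hx
      omega
    · rintro ⟨hle, -⟩
      rw [L1_zero x (by exact_mod_cast hle), M.init_origin]
      exact hn
    · rintro ⟨hle, hne⟩
      exfalso
      have := L1_nonneg x
      omega
  | succ t ih =>
    intro x
    have hS : ∀ y, y ∈ M.S (t + 1) ↔ (L1 y ≤ (t : ℤ) ∧ L1 y % 2 = (t : ℤ) % 2) := by
      intro y
      rw [hM t, Set.mem_setOf_eq]
      constructor
      · intro h1
        by_contra hc
        rcases lt_or_ge (t : ℤ) (L1 y) with hgt | hle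
        · rw [(ih y).1 hgt] at h1; linarith
        · rw [(ih y).2.2 ⟨hle, fun hp => hc ⟨hle, hp⟩⟩] at h1; linarith
      · exact fun hy => (ih y).2.1 hy
    have hind0 : ∀ y, ¬(L1 y ≤ (t : ℤ) ∧ L1 y % 2 = (t : ℤ) % 2) →
        (M.S (t + 1)).indicator (M.η t) y = 0 :=
      fun y hy => Set.indicator_of_notMem (fun hmem => hy ((hS y).mp hmem)) _
    have hind1 : ∀ y, (L1 y ≤ (t : ℤ) ∧ L1 y % 2 = (t : ℤ) % 2) →
        (M.S (t + 1)).indicator (M.η t) y = M.η t y :=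
      fun y hy => Set.indicator_of_mem ((hS y).mpr hy) _
    have hindnn : ∀ y, 0 ≤ (M.S (t + 1)).indicator (M.η t) y := by
      intro y
      apply Set.indicator_nonneg
      intro a ha
      linarith [(ih a).2.1 ((hS a).mp ha)]
    have hev := M.evolve t x
    refine ⟨?_, ?_, ?_⟩
    · -- outside radius t+1 : mass stays h
      intro hx
      have hxS : x ∉ M.S (t + 1) := fun hx' => by have := ((hS x).mp hx').1; omega
      have hcompl : (M.S (t + 1))ᶜ.indicator (M.η t) x = M.η t x :=
        Set.indicator_of_mem (Set.mem_compl hxS) _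
      have hsum0 : ∑ i : Fin d, ((M.S (t + 1)).indicator (M.η t) (nbr x i 1)
          + (M.S (t + 1)).indicator (M.η t) (nbr x i (-1))) = 0 := by
        apply Finset.sum_eq_zero
        intro i _
        rw [hind0 _ (by rcases L1_nbr x i 1 (Or.inl rfl) with h' | h' <;> omega),
          hind0 _ (by rcases L1_nbr x i (-1) (Or.inr rfl) with h' | h' <;> omega)]
        ring
      rw [hev, hcompl, hsum0, (ih x).1 (by omega)]
      ring
    · -- parity match at t+1 : unstable
      rintro ⟨hle, hpar⟩
      rcases eq_or_lt_of_le hle with heq | hlt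
      · -- boundary case L1 x = t+1
        have hη : M.η t x = h := (ih x).1 (by omega)
        have hxS : x ∉ M.S (t + 1) := fun hx' => by have := ((hS x).mp hx').1; omega
        have hcompl : (M.S (t + 1))ᶜ.indicator (M.η t) x = M.η t x :=
          Set.indicator_of_mem (Set.mem_compl hxS) _
        obtain ⟨i0, e0, he0, hdec⟩ := exists_dec x (by omega)
        have hnbr : (M.S (t + 1)).indicator (M.η t) (nbr x i0 e0) = M.η t (nbr x i0 e0) :=
          hind1 _ ⟨by omega, by omega⟩
        have h1 : 1 ≤ M.η t (nbr x i0 e0) := (ih _).2.1 ⟨by omega, by omega⟩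
        have hterm : (1 : ℝ) ≤ (M.S (t + 1)).indicator (M.η t) (nbr x i0 1)
            + (M.S (t + 1)).indicator (M.η t) (nbr x i0 (-1)) := by
          rcases he0 with rfl | rfl
          · have := hindnn (nbr x i0 (-1)); rw [hnbr] at *; linarith
          · have := hindnn (nbr x i0 1); rw [hnbr] at *; linarith
        have hsumge : (1 : ℝ) ≤ ∑ i : Fin d, ((M.S (t + 1)).indicator (M.η t) (nbr x i 1)
            + (M.S (t + 1)).indicator (M.η t) (nbr x i (-1))) :=
          le_trans hterm (Finset.single_le_sum
            (f := fun i => (M.S (t + 1)).indicator (M.η t) (nbr x i 1)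
              + (M.S (t + 1)).indicator (M.η t) (nbr x i (-1)))
            (fun i _ => add_nonneg (hindnn _) (hindnn _)) (Finset.mem_univ i0))
        have hfrac : (0 : ℝ) < 1 / (2 * d) := by positivity
        have := mul_le_mul_of_nonneg_left hsumge (le_of_lt hfrac)
        rw [hev, hcompl, hη]
        linarith
      · -- interior case L1 x ≤ t - 1
        have hη0 : M.η t x = 0 := (ih x).2.2 ⟨by omega, by omega⟩
        have hxS : x ∉ M.S (t + 1) := fun hx' => by have := ((hS x).mp hx').2; omega
        have hcompl : (M.S (t + 1))ᶜ.indicator (M.η t) x = M.η t x :=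
          Set.indicator_of_mem (Set.mem_compl hxS) _
        have hpair : ∀ i : Fin d, (2 : ℝ) ≤ (M.S (t + 1)).indicator (M.η t) (nbr x i 1)
            + (M.S (t + 1)).indicator (M.η t) (nbr x i (-1)) := by
          intro i
          have c1 : L1 (nbr x i 1) ≤ (t : ℤ) ∧ L1 (nbr x i 1) % 2 = (t : ℤ) % 2 := by
            rcases L1_nbr x i 1 (Or.inl rfl) with h' | h' <;> omega
          have c2 : L1 (nbr x i (-1)) ≤ (t : ℤ) ∧ L1 (nbr x i (-1)) % 2 = (t : ℤ) % 2 := by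
            rcases L1_nbr x i (-1) (Or.inr rfl) with h' | h' <;> omega
          rw [hind1 _ c1, hind1 _ c2]
          linarith [(ih (nbr x i 1)).2.1 c1, (ih (nbr x i (-1))).2.1 c2]
        have hsumge : (2 : ℝ) * d ≤ ∑ i : Fin d, ((M.S (t + 1)).indicator (M.η t) (nbr x i 1)
            + (M.S (t + 1)).indicator (M.η t) (nbr x i (-1))) := by
          calc (2 : ℝ) * d = ∑ _i : Fin d, (2 : ℝ) := by
                simp [Finset.sum_const, Finset.card_univ]; ring
            _ ≤ _ := Finset.sum_le_sum fun i _ => hpair i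
        have hfrac : (0 : ℝ) < 1 / (2 * d) := by positivity
        have h2 := mul_le_mul_of_nonneg_left hsumge (le_of_lt hfrac)
        have h3 : 1 / (2 * (d : ℝ)) * (2 * d) = 1 := by field_simp
        rw [hev, hcompl, hη0]
        linarith
    · -- parity mismatch at t+1 : mass 0
      rintro ⟨hle, hpar⟩
      have hmatch : L1 x ≤ (t : ℤ) ∧ L1 x % 2 = (t : ℤ) % 2 := by
        have := L1_nonneg x; omega
      have hxS : x ∈ M.S (t + 1) := (hS x).mpr hmatch
      have hcompl : (M.S (t + 1))ᶜ.indicator (M.η t) x = 0 :=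
        Set.indicator_of_notMem (by simpa using hxS) _
      have hsum0 : ∑ i : Fin d, ((M.S (t + 1)).indicator (M.η t) (nbr x i 1)
          + (M.S (t + 1)).indicator (M.η t) (nbr x i (-1))) = 0 := by
        apply Finset.sum_eq_zero
        intro i _
        rw [hind0 _ (by rcases L1_nbr x i 1 (Or.inl rfl) with h' | h' <;> omega),
          hind0 _ (by rcases L1_nbr x i (-1) (Or.inr rfl) with h' | h' <;> omega)]
        ring
      rw [hev, hcompl, hsum0]
      ring

lemma Tt_iff {d : ℕ} (hd : 1 ≤ d) {n h : ℝ}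
    (hh1 : 1 - 1 / (2 * (d : ℝ)) ≤ h) (hh2 : h < 1) (hn : 1 ≤ n)
    (M : SplittingModel d n h) (hM : M.Parallel) (t : ℕ) (ht : 1 ≤ t) (x : Fin d → ℤ) :
    x ∈ M.Tt t ↔ L1 x ≤ (t : ℤ) - 1 := by
  have tri := eta_tri hd hh1 hh2 hn M hM
  have hS : ∀ s : ℕ, ∀ y, y ∈ M.S (s + 1) ↔ (L1 y ≤ (s : ℤ) ∧ L1 y % 2 = (s : ℤ) % 2) := by
    intro s y
    rw [hM s, Set.mem_setOf_eq]
    constructor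
    · intro h1
      by_contra hc
      rcases lt_or_ge (s : ℤ) (L1 y) with hgt | hle
      · rw [(tri s y).1 hgt] at h1; linarith
      · rw [(tri s y).2.2 ⟨hle, fun hp => hc ⟨hle, hp⟩⟩] at h1; linarith
    · exact fun hy => (tri s y).2.1 hy
  constructor
  · intro hx
    simp only [SplittingModel.Tt, Set.mem_iUnion] at hx
    obtain ⟨t', ht', hx⟩ := hx
    rw [Set.mem_Icc] at ht'
    obtain ⟨s, rfl⟩ : ∃ s, t' = s + 1 := ⟨t' - 1, by omega⟩
    have := ((hS s x).mp hx).1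
    omega
  · intro hx
    have hnn := L1_nonneg x
    simp only [SplittingModel.Tt, Set.mem_iUnion]
    refine ⟨(L1 x).toNat + 1, ?_, ?_⟩
    · rw [Set.mem_Icc]; omega
    · rw [hS]
      constructor
      · rw [Int.toNat_of_nonneg hnn]
      · rw [Int.toNat_of_nonneg hnn]

/-- For the splitting automaton on `ℤ^d` with background `1 - 1/(2d) ≤ h < 1` and
initial mass `n ≥ 1`, the diamond `D` is the limiting shape of the sets `T_t`,
with scaling function `f t = 1/t`. -/
theorem diamond_limiting_shape {d : ℕ} (hd : 1 ≤ d) {n h : ℝ}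
    (hh1 : 1 - 1 / (2 * (d : ℝ)) ≤ h) (hh2 : h < 1) (hn : 1 ≤ n)
    (M : SplittingModel d n h) (hM : M.Parallel) :
    ∀ ε : ℝ, 0 < ε → ∃ tε : ℕ, ∀ t : ℕ, tε < t →
      innerNbhd (Diamond d) ε ⊆ (1 / (t : ℝ)) • cubes (M.Tt t) ∧
        (1 / (t : ℝ)) • cubes (M.Tt t) ⊆ outerNbhd (Diamond d) ε := by
  have hdR : (1 : ℝ) ≤ d := by exact_mod_cast hd
  intro ε hε
  refine ⟨⌈((d : ℝ) + 2) / ε⌉₊ + 1, fun t ht => ?_⟩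
  have ht1 : 1 ≤ t := by omega
  have htpos : (0 : ℝ) < t := by
    have : (1 : ℝ) ≤ t := by exact_mod_cast ht1
    linarith
  have hceil : ((d : ℝ) + 2) / ε < t := by
    have h1 : ((d : ℝ) + 2) / ε ≤ ⌈((d : ℝ) + 2) / ε⌉₊ := Nat.le_ceil _
    have h3 : ((⌈((d : ℝ) + 2) / ε⌉₊ : ℝ) + 1) ≤ t := by exact_mod_cast le_of_lt ht
    linarith
  have hkey : (d : ℝ) + 2 ≤ t * ε := by
    rw [div_lt_iff₀ hε] at hceil
    linarith
  have hTt : ∀ x : Fin d → ℤ, x ∈ M.Tt t ↔ L1 x ≤ (t : ℤ) - 1 :=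
    Tt_iff hd hh1 hh2 hn M hM t ht1
  constructor
  · -- inner inclusion
    intro p hp
    obtain ⟨hpD, hpd⟩ := hp
    have hsum : (∑ i, |p i|) ≤ 1 - ε / 2 := by
      by_contra hc
      push_neg at hc
      have hi0 : (0 : ℕ) < d := hd
      set i0 : Fin d := ⟨0, hi0⟩
      have hb : ∃ b : ℝ, |b| = |p i0| + 3 * ε / 4 ∧ |p i0 - b| = 3 * ε / 4 := by
        rcases le_or_gt 0 (p i0) with hp0 | hp0
        · refine ⟨p i0 + 3 * ε / 4,
            by rw [abs_of_nonneg hp0, abs_of_nonneg (by linarith)], ?_⟩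
          rw [show p i0 - (p i0 + 3 * ε / 4) = -(3 * ε / 4) by ring, abs_neg,
            abs_of_nonneg (by linarith)]
        · refine ⟨p i0 - 3 * ε / 4, ?_, ?_⟩
          · rw [abs_of_neg hp0, abs_of_neg (by linarith)]; ring
          · rw [show p i0 - (p i0 - 3 * ε / 4) = 3 * ε / 4 by ring,
              abs_of_nonneg (by linarith)]
      obtain ⟨b, hb1, hb2⟩ := hb
      set q : EuclideanSpace ℝ (Fin d) := WithLp.toLp 2 (Function.update p i0 b) with hqdef
      have hq_sum : (∑ i, |q i|) = (∑ i, |p i|) + 3 * ε / 4 := by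
        have := sum_abs_update p i0 b
        rw [show (∑ i, |q i|) = ∑ j, |Function.update p i0 b j| from rfl, this, hb1]
        ring
      have hq_not : q ∈ (Diamond d)ᶜ := by
        simp only [Diamond, Set.mem_compl_iff, Set.mem_setOf_eq, not_le]
        rw [hq_sum]
        linarith
      have hdist : dist p q = 3 * ε / 4 := by
        rw [EuclideanSpace.dist_eq]
        have hterm : ∀ i, dist (p i) (q i) ^ 2 = if i = i0 then (3 * ε / 4) ^ 2 else 0 := by
          intro i
          by_cases hii : i = i0
          · rw [if_pos hii, Real.dist_eq, hii,
              show q i0 = b from Function.update_self i0 b p, hb2]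
          · rw [if_neg hii, Real.dist_eq, show q i = p i from Function.update_of_ne hii _ _,
              sub_self, abs_zero]
            ring
        rw [Finset.sum_congr rfl fun i _ => hterm i,
          Finset.sum_ite_eq' Finset.univ i0 fun _ => (3 * ε / 4) ^ 2,
          if_pos (Finset.mem_univ i0)]
        exact Real.sqrt_sq (by positivity)
      have hle := Metric.infDist_le_dist_of_mem (x := p) hq_not
      rw [hdist] at hle
      linarith
    set x : Fin d → ℤ := fun i => round ((t : ℝ) * p i) with hxdef
    have hround : ∀ i, |(t : ℝ) * p i - (x i : ℝ)| ≤ 1 / 2 := fun i => abs_sub_round _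
    have habs2 : ∀ i, |(x i : ℝ)| ≤ (t : ℝ) * |p i| + 1 / 2 := by
      intro i
      have h1 := hround i
      have h2 : |(x i : ℝ)| - |(t : ℝ) * p i| ≤ |(x i : ℝ) - (t : ℝ) * p i| :=
        abs_sub_abs_le_abs_sub _ _
      rw [abs_sub_comm] at h2
      have h3 : |(t : ℝ) * p i| = t * |p i| := by rw [abs_mul, abs_of_pos htpos]
      linarith
    have hxL : L1 x ≤ (t : ℤ) - 1 := by
      have hR : ((L1 x : ℤ) : ℝ) ≤ (t : ℝ) * (∑ i, |p i|) + d / 2 := by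
        have hcast : ((L1 x : ℤ) : ℝ) = ∑ i, |(x i : ℝ)| := by
          simp [L1]
        rw [hcast]
        calc (∑ i, |(x i : ℝ)|) ≤ ∑ i, ((t : ℝ) * |p i| + 1 / 2) :=
              Finset.sum_le_sum fun i _ => habs2 i
          _ = (t : ℝ) * (∑ i, |p i|) + d / 2 := by
              rw [Finset.sum_add_distrib, ← Finset.mul_sum]
              simp [Finset.sum_const, Finset.card_univ]
              ring
      have hmul := mul_le_mul_of_nonneg_left hsum (le_of_lt htpos)
      have hfin : ((L1 x : ℤ) : ℝ) ≤ (((t : ℤ) - 1 : ℤ) : ℝ) := by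
        push_cast
        nlinarith [hkey]
      exact_mod_cast hfin
    rw [Set.mem_smul_set]
    refine ⟨(t : ℝ) • p, ⟨x, (hTt x).mpr hxL, fun i => ?_⟩, ?_⟩
    · exact hround i
    · rw [smul_smul, one_div, inv_mul_cancel₀ (ne_of_gt htpos), one_smul]
  · -- outer inclusion
    intro pp hpp
    rw [Set.mem_smul_set] at hpp
    obtain ⟨q, hq, rfl⟩ := hpp
    obtain ⟨x, hxT, hxq⟩ := hq
    have hxL : L1 x ≤ (t : ℤ) - 1 := (hTt x).mp hxT
    show Metric.infDist ((1 / (t : ℝ)) • q) (Diamond d) ≤ ε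
    set p : EuclideanSpace ℝ (Fin d) := (1 / (t : ℝ)) • q with hpdef
    have hpi : ∀ i, p i = (1 / (t : ℝ)) * q i := fun i => rfl
    have hsumq : (∑ i, |q i|) ≤ (t : ℝ) - 1 + d / 2 := by
      have hxR : (∑ i, |(x i : ℝ)|) ≤ (t : ℝ) - 1 := by
        have h' : ((∑ i, |x i| : ℤ) : ℝ) ≤ (((t : ℤ) - 1 : ℤ) : ℝ) := Int.cast_le.mpr hxL
        push_cast at h'
        exact h'
      calc (∑ i, |q i|) ≤ ∑ i, (|(x i : ℝ)| + 1 / 2) := by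
            refine Finset.sum_le_sum fun i _ => ?_
            calc |q i| = |(x i : ℝ) + (q i - (x i : ℝ))| := by congr 1; ring
              _ ≤ |(x i : ℝ)| + |q i - (x i : ℝ)| := abs_add_le _ _
              _ ≤ |(x i : ℝ)| + 1 / 2 := by linarith [hxq i]
        _ = (∑ i, |(x i : ℝ)|) + d / 2 := by
            rw [Finset.sum_add_distrib]
            simp [Finset.sum_const, Finset.card_univ]
            ring
        _ ≤ (t : ℝ) - 1 + d / 2 := by linarith [hxR]
    set r : ℝ := ∑ i, |p i| with hrdef
    have hr_eq : r = (1 / (t : ℝ)) * ∑ i, |q i| := by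
      rw [hrdef, Finset.mul_sum]
      refine Finset.sum_congr rfl fun i _ => ?_
      rw [hpi i, abs_mul, abs_of_pos (by positivity : (0 : ℝ) < 1 / (t : ℝ))]
    have hr_t : r * t = ∑ i, |q i| := by
      rw [hr_eq]
      field_simp
    have hr1 : r * t ≤ (t : ℝ) - 1 + d / 2 := by rw [hr_t]; exact hsumq
    rcases le_or_gt r 1 with hr | hr
    · have hpD : p ∈ Diamond d := hr
      rw [Metric.infDist_zero_of_mem hpD]
      linarith
    · have hrpos : (0 : ℝ) < r := by linarith
      set p' : EuclideanSpace ℝ (Fin d) := (1 / r) • p with hp'def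
      have hp'D : p' ∈ Diamond d := by
        show (∑ i, |p' i|) ≤ 1
        have hcalc : (∑ i, |p' i|) = (1 / r) * r := by
          rw [hrdef, Finset.mul_sum]
          refine Finset.sum_congr rfl fun i _ => ?_
          rw [show p' i = (1 / r) * p i from rfl, abs_mul,
            abs_of_pos (by positivity : (0 : ℝ) < 1 / r)]
        rw [hcalc, one_div, inv_mul_cancel₀ (ne_of_gt hrpos)]
      have hnorm : ‖p‖ ≤ r := by
        rw [EuclideanSpace.norm_eq]
        have h1 : (∑ i, ‖p i‖ ^ 2) ≤ r ^ 2 := by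
          have := Finset.sum_sq_le_sq_sum_of_nonneg
            (s := Finset.univ) (f := fun i => |p i|) fun i _ => abs_nonneg (p i)
          simpa [Real.norm_eq_abs, sq_abs] using this
        calc Real.sqrt (∑ i, ‖p i‖ ^ 2) ≤ Real.sqrt (r ^ 2) := Real.sqrt_le_sqrt h1
          _ = r := Real.sqrt_sq (le_of_lt hrpos)
      have h1r : (0 : ℝ) ≤ 1 - 1 / r := by
        have : 1 / r ≤ 1 := by rw [div_le_one hrpos]; linarith
        linarith
      have hsub : p - p' = (1 - 1 / r) • p := by
        rw [hp'def, sub_smul, one_smul]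
      have hdist2 : dist p p' = (1 - 1 / r) * ‖p‖ := by
        rw [dist_eq_norm, hsub, norm_smul, Real.norm_eq_abs, abs_of_nonneg h1r]
      have hfin : Metric.infDist p (Diamond d) ≤ dist p p' :=
        Metric.infDist_le_dist_of_mem hp'D
      have hd3 : dist p p' ≤ r - 1 := by
        rw [hdist2]
        have hmm := mul_le_mul_of_nonneg_left hnorm h1r
        have heq : (1 - 1 / r) * r = r - 1 := by field_simp
        linarith
      have h5 : (r - 1) * t ≤ ε * t := by nlinarith [hr1, hkey, hdR]
      have h6 : r - 1 ≤ ε := le_of_mul_le_mul_right (by linarith [h5]) htpos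
      linarith
end

section
/- Consider the splitting automaton on Z^d with d ≥ 1, background 1 − 1/(2d) ≤ h < 1 and initial mass n ≥ 1. Then for every integer t ≥ 1, the set of sites that split at least once up to time t is exactly the lattice diamond of radius t − 1: T_t = {x ∈ Z^d : Σ_i |x_i| ≤ t − 1}; consequently T_t ∪ ∂T_t = {x ∈ Z^d : Σ_i |x_i| ≤ t}. -/
open scoped BigOperators

/-- The (outer lattice) boundary of `X ⊆ ℤ^d`: the sites not in `X` having a nearest
neighbor in `X`. -/
def latticeBdry {d : ℕ} (X : Set (Fin d → ℤ)) : Set (Fin d → ℤ) :=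
  {x | x ∉ X ∧ ∃ y ∈ X, Adj x y}

section Aux

variable {d : ℕ}

/-- `ℓ¹` norm on `ℤ^d`. -/
def nrm (x : Fin d → ℤ) : ℤ := ∑ i, |x i|

lemma nrm_nonneg (x : Fin d → ℤ) : 0 ≤ nrm x :=
  Finset.sum_nonneg fun _ _ => abs_nonneg _

lemma nrm_update (x : Fin d → ℤ) (i : Fin d) (v : ℤ) :
    nrm (Function.update x i v) = nrm x - |x i| + |v| := by
  have habs : (fun j => |Function.update x i v j|)
      = Function.update (fun j => |x j|) i |v| := by
    funext j
    rcases eq_or_ne j i with rfl | hj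
    · simp
    · simp [Function.update_of_ne hj]
  unfold nrm
  calc ∑ j, |Function.update x i v j|
      = ∑ j, Function.update (fun j => |x j|) i |v| j := by rw [habs]
    _ = |v| + ∑ j ∈ Finset.univ.erase i, |x j| := by
        rw [← Finset.add_sum_erase _ _ (Finset.mem_univ i)]
        congr 1
        · simp
        · exact Finset.sum_congr rfl fun j hj =>
            Function.update_of_ne (Finset.ne_of_mem_erase hj) _ _
    _ = (∑ j, |x j|) - |x i| + |v| := by
        rw [← Finset.add_sum_erase _ _ (Finset.mem_univ i)]; ring

lemma nrm_nbr (x : Fin d → ℤ) (i : Fin d) (ε : ℤ) :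
    nrm (nbr x i ε) = nrm x - |x i| + |x i + ε| := nrm_update x i _

lemma nrm_nbr_cases (x : Fin d → ℤ) (i : Fin d) {ε : ℤ} (hε : ε = 1 ∨ ε = -1) :
    nrm (nbr x i ε) = nrm x + 1 ∨ nrm (nbr x i ε) = nrm x - 1 := by
  rw [nrm_nbr]
  rcases abs_cases (x i) with ⟨h1, h2⟩ | ⟨h1, h2⟩ <;>
    rcases abs_cases (x i + ε) with ⟨g1, g2⟩ | ⟨g1, g2⟩ <;>
    rcases hε with rfl | rfl <;> omega

lemma exists_down (x : Fin d → ℤ) (hx : 1 ≤ nrm x) :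
    ∃ i, ∃ ε : ℤ, (ε = 1 ∨ ε = -1) ∧ nrm (nbr x i ε) = nrm x - 1 := by
  have hex : ∃ i, x i ≠ 0 := by
    by_contra hcon
    push_neg at hcon
    have : nrm x = 0 := by
      unfold nrm; exact Finset.sum_eq_zero fun i _ => by rw [hcon i]; simp
    omega
  obtain ⟨i, hi⟩ := hex
  rcases lt_or_gt_of_ne hi with hlt | hgt
  · refine ⟨i, 1, Or.inl rfl, ?_⟩
    rw [nrm_nbr]
    rcases abs_cases (x i) with ⟨h1, h2⟩ | ⟨h1, h2⟩ <;>
      rcases abs_cases (x i + 1) with ⟨g1, g2⟩ | ⟨g1, g2⟩ <;> omega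
  · refine ⟨i, -1, Or.inr rfl, ?_⟩
    rw [nrm_nbr]
    rcases abs_cases (x i) with ⟨h1, h2⟩ | ⟨h1, h2⟩ <;>
      rcases abs_cases (x i + (-1)) with ⟨g1, g2⟩ | ⟨g1, g2⟩ <;> omega

lemma adj_nbr (x : Fin d → ℤ) (i : Fin d) {ε : ℤ} (hε : ε = 1 ∨ ε = -1) :
    Adj x (nbr x i ε) := by
  unfold Adj
  have habs : (fun j => |x j - nbr x i ε j|)
      = Function.update (fun _ => (0 : ℤ)) i 1 := by
    funext j
    rcases eq_or_ne j i with rfl | hj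
    · rcases hε with rfl | rfl <;> simp [nbr]
    · simp [nbr, Function.update_of_ne hj]
  calc (∑ j, |x j - nbr x i ε j|)
      = ∑ j, Function.update (fun _ => (0 : ℤ)) i 1 j := by rw [habs]
    _ = 1 := by
        rw [Finset.sum_update_of_mem (Finset.mem_univ i)]
        simp

lemma nrm_le_adj {x y : Fin d → ℤ} (hadj : Adj x y) : nrm x ≤ nrm y + 1 := by
  unfold Adj at hadj
  have hle : nrm x ≤ nrm y + ∑ j, |x j - y j| := by
    unfold nrm
    rw [← Finset.sum_add_distrib]
    refine Finset.sum_le_sum fun j _ => ?_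
    have := abs_sub_abs_le_abs_sub (x j) (y j)
    omega
  omega

/-- The key invariant for the splitting automaton. -/
lemma key_invariant {d : ℕ} (hd : 1 ≤ d) {n h : ℝ}
    (hh1 : 1 - 1 / (2 * (d : ℝ)) ≤ h) (hh2 : h < 1) (hn : 1 ≤ n)
    (M : SplittingModel d n h) (hM : M.Parallel) :
    ∀ t : ℕ, ∀ x : Fin d → ℤ,
      (((t : ℤ) < nrm x → M.η t x = h) ∧
       (nrm x ≤ (t : ℤ) → ¬ Even (nrm x + t) → M.η t x = 0) ∧
       (nrm x ≤ (t : ℤ) → Even (nrm x + t) → 1 ≤ M.η t x)) := by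
  have hd1 : (1 : ℝ) ≤ (d : ℝ) := by exact_mod_cast hd
  have hd0 : (0 : ℝ) < 2 * (d : ℝ) := by linarith
  have hc0 : (0 : ℝ) < 1 / (2 * (d : ℝ)) := by positivity
  intro t
  induction t with
  | zero =>
    intro x
    refine ⟨?_, ?_, ?_⟩
    · intro hx
      apply M.init_other
      intro h0
      rw [h0] at hx
      have : nrm (0 : Fin d → ℤ) = 0 := by unfold nrm; simp
      omega
    · intro h1 h2
      exact absurd ⟨0, by have := nrm_nonneg x; push_cast at h1 ⊢; omega⟩ h2
    · intro h1 _
      have hx0 : x = 0 := by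
        have hz : nrm x = 0 := le_antisymm (by exact_mod_cast h1) (nrm_nonneg x)
        have := (Finset.sum_eq_zero_iff_of_nonneg
          (fun i (_ : i ∈ Finset.univ) => abs_nonneg (x i))).mp hz
        funext i
        exact abs_eq_zero.mp (this i (Finset.mem_univ i))
      rw [hx0, M.init_origin]; exact hn
  | succ t ih =>
    -- characterization of the splitting set
    have hmem : ∀ y, y ∈ M.S (t + 1) ↔ (nrm y ≤ (t : ℤ) ∧ Even (nrm y + t)) := by
      intro y
      rw [hM t]
      constructor
      · intro hy
        have hy' : 1 ≤ M.η t y := hy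
        by_cases h1 : nrm y ≤ (t : ℤ)
        · refine ⟨h1, ?_⟩
          by_contra h2
          rw [(ih y).2.1 h1 h2] at hy'
          linarith
        · push_neg at h1
          rw [(ih y).1 h1] at hy'
          linarith
      · rintro ⟨h1, h2⟩
        exact (ih y).2.2 h1 h2
    have hind_nonneg : ∀ y, 0 ≤ (M.S (t + 1)).indicator (M.η t) y := by
      intro y
      refine Set.indicator_nonneg (fun z hz => ?_) y
      have hz' := (hmem z).mp hz
      linarith [(ih z).2.2 hz'.1 hz'.2]
    intro x
    refine ⟨?_, ?_, ?_⟩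
    · -- outside the diamond: mass stays h
      intro hx
      have hx' : (t : ℤ) + 1 < nrm x := by push_cast at hx; omega
      have hxS : x ∉ M.S (t + 1) := fun hc => by
        have := ((hmem x).mp hc).1; omega
      have hnbr0 : ∀ (i : Fin d) (ε : ℤ), (ε = 1 ∨ ε = -1) →
          (M.S (t + 1)).indicator (M.η t) (nbr x i ε) = 0 := by
        intro i ε hε
        apply Set.indicator_of_notMem
        intro hc
        have h1 := ((hmem _).mp hc).1
        rcases nrm_nbr_cases x i hε with he | he <;> omega
      have hsum0 : (∑ i : Fin d, ((M.S (t + 1)).indicator (M.η t) (nbr x i 1)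
          + (M.S (t + 1)).indicator (M.η t) (nbr x i (-1)))) = 0 :=
        Finset.sum_eq_zero fun i _ => by
          rw [hnbr0 i 1 (Or.inl rfl), hnbr0 i (-1) (Or.inr rfl)]; ring
      rw [M.evolve t x, hsum0,
        Set.indicator_of_mem (show x ∈ (M.S (t + 1))ᶜ from hxS), (ih x).1 (by omega)]
      ring
    · -- wrong parity inside: mass becomes 0
      intro hx1 hx2
      have hx1' : nrm x ≤ (t : ℤ) + 1 := by push_cast at hx1; omega
      have hx2' : ¬ Even (nrm x + (t : ℤ) + 1) := by
        rw [show nrm x + (t : ℤ) + 1 = nrm x + ((t : ℤ) + 1) by ring,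
          show ((t : ℤ) + 1) = ((t + 1 : ℕ) : ℤ) by push_cast; ring]
        exact hx2
      have hEt : Even (nrm x + (t : ℤ)) := by
        rcases Int.even_or_odd (nrm x + (t : ℤ)) with he | ho
        · exact he
        · exact absurd (by rcases ho with ⟨m, hm⟩; exact ⟨m + 1, by omega⟩) hx2'
      have hle : nrm x ≤ (t : ℤ) := by
        rcases hEt with ⟨k, hk⟩; omega
      have hxS : x ∈ M.S (t + 1) := (hmem x).mpr ⟨hle, hEt⟩
      have hnbr0 : ∀ (i : Fin d) (ε : ℤ), (ε = 1 ∨ ε = -1) →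
          (M.S (t + 1)).indicator (M.η t) (nbr x i ε) = 0 := by
        intro i ε hε
        apply Set.indicator_of_notMem
        intro hc
        have h2 := ((hmem _).mp hc).2
        rcases hEt with ⟨k, hk⟩
        rcases h2 with ⟨m, hm⟩
        rcases nrm_nbr_cases x i hε with he | he <;> omega
      have hsum0 : (∑ i : Fin d, ((M.S (t + 1)).indicator (M.η t) (nbr x i 1)
          + (M.S (t + 1)).indicator (M.η t) (nbr x i (-1)))) = 0 :=
        Finset.sum_eq_zero fun i _ => by
          rw [hnbr0 i 1 (Or.inl rfl), hnbr0 i (-1) (Or.inr rfl)]; ring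
      rw [M.evolve t x, hsum0,
        Set.indicator_of_notMem (Set.notMem_compl_iff.mpr hxS)]
      ring
    · -- right parity inside: mass at least 1
      intro hx1 hx2
      have hx1' : nrm x ≤ (t : ℤ) + 1 := by push_cast at hx1; omega
      have hx2' : Even (nrm x + (t : ℤ) + 1) := by
        rw [show nrm x + (t : ℤ) + 1 = nrm x + ((t : ℤ) + 1) by ring,
          show ((t : ℤ) + 1) = ((t + 1 : ℕ) : ℤ) by push_cast; ring]
        exact hx2
      have hOt : ¬ Even (nrm x + (t : ℤ)) := by
        rcases hx2' with ⟨k, hk⟩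
        rintro ⟨m, hm⟩
        omega
      rcases eq_or_lt_of_le hx1' with heq | hlt
      · -- boundary case: nrm x = t + 1
        have hxS : x ∉ M.S (t + 1) := fun hc => by
          have := ((hmem x).mp hc).1; omega
        obtain ⟨i, ε, hε, hdown⟩ := exists_down x (by omega)
        have hyS : nbr x i ε ∈ M.S (t + 1) :=
          (hmem _).mpr ⟨by omega, ⟨(t : ℤ), by omega⟩⟩
        have hy1 : 1 ≤ (M.S (t + 1)).indicator (M.η t) (nbr x i ε) := by
          rw [Set.indicator_of_mem hyS]
          exact (ih _).2.2 (by omega) ⟨(t : ℤ), by omega⟩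
        have hterm : 1 ≤ (M.S (t + 1)).indicator (M.η t) (nbr x i 1)
            + (M.S (t + 1)).indicator (M.η t) (nbr x i (-1)) := by
          rcases hε with rfl | rfl
          · linarith [hind_nonneg (nbr x i (-1))]
          · linarith [hind_nonneg (nbr x i 1)]
        have hsum : 1 ≤ (∑ i : Fin d, ((M.S (t + 1)).indicator (M.η t) (nbr x i 1)
            + (M.S (t + 1)).indicator (M.η t) (nbr x i (-1)))) := by
          refine le_trans hterm
            (Finset.single_le_sum (f := fun j =>
              (M.S (t + 1)).indicator (M.η t) (nbr x j 1)
              + (M.S (t + 1)).indicator (M.η t) (nbr x j (-1)))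
              (fun j _ => add_nonneg (hind_nonneg _) (hind_nonneg _))
              (Finset.mem_univ i))
        rw [M.evolve t x,
          Set.indicator_of_mem (show x ∈ (M.S (t + 1))ᶜ from hxS), (ih x).1 (by omega)]
        have hmul := mul_le_mul_of_nonneg_left hsum hc0.le
        linarith
      · -- interior case: nrm x ≤ t - 1
        have hne : nrm x ≠ (t : ℤ) := fun he => hOt ⟨(t : ℤ), by omega⟩
        have hle : nrm x ≤ (t : ℤ) - 1 := by omega
        have hxS : x ∉ M.S (t + 1) := fun hc => hOt ((hmem x).mp hc).2
        have hnb : ∀ (i : Fin d) (ε : ℤ), (ε = 1 ∨ ε = -1) →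
            1 ≤ (M.S (t + 1)).indicator (M.η t) (nbr x i ε) := by
          intro i ε hε
          have hEy : Even (nrm (nbr x i ε) + (t : ℤ)) := by
            rcases Int.even_or_odd (nrm (nbr x i ε) + (t : ℤ)) with he | ho
            · exact he
            · exfalso
              apply hOt
              rcases ho with ⟨m, hm⟩
              rcases nrm_nbr_cases x i hε with hy | hy
              · exact ⟨m, by omega⟩
              · exact ⟨m + 1, by omega⟩
          have hley : nrm (nbr x i ε) ≤ (t : ℤ) := by
            rcases nrm_nbr_cases x i hε with hy | hy <;> omega
          have hyS : nbr x i ε ∈ M.S (t + 1) := (hmem _).mpr ⟨hley, hEy⟩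
          rw [Set.indicator_of_mem hyS]
          exact (ih _).2.2 hley hEy
        have hsum : 2 * (d : ℝ) ≤ (∑ i : Fin d,
            ((M.S (t + 1)).indicator (M.η t) (nbr x i 1)
            + (M.S (t + 1)).indicator (M.η t) (nbr x i (-1)))) := by
          calc 2 * (d : ℝ) = ∑ _i : Fin d, (2 : ℝ) := by
                simp [Finset.sum_const, Finset.card_univ]; ring
            _ ≤ _ := Finset.sum_le_sum fun i _ => by
                linarith [hnb i 1 (Or.inl rfl), hnb i (-1) (Or.inr rfl)]
        have hx0 : M.η t x = 0 := (ih x).2.1 (by omega) hOt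
        rw [M.evolve t x,
          Set.indicator_of_mem (show x ∈ (M.S (t + 1))ᶜ from hxS), hx0]
        have h2d : (1 : ℝ) = 1 / (2 * (d : ℝ)) * (2 * (d : ℝ)) := by
          field_simp
        have hmul := mul_le_mul_of_nonneg_left hsum hc0.le
        linarith

lemma mem_S_iff {d : ℕ} (hd : 1 ≤ d) {n h : ℝ}
    (hh1 : 1 - 1 / (2 * (d : ℝ)) ≤ h) (hh2 : h < 1) (hn : 1 ≤ n)
    (M : SplittingModel d n h) (hM : M.Parallel) (s : ℕ) (y : Fin d → ℤ) :
    y ∈ M.S (s + 1) ↔ (nrm y ≤ (s : ℤ) ∧ Even (nrm y + s)) := by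
  have key := key_invariant hd hh1 hh2 hn M hM s
  rw [hM s]
  constructor
  · intro hy
    have hy' : 1 ≤ M.η s y := hy
    by_cases h1 : nrm y ≤ (s : ℤ)
    · refine ⟨h1, ?_⟩
      by_contra h2
      rw [(key y).2.1 h1 h2] at hy'
      linarith
    · push_neg at h1
      rw [(key y).1 h1] at hy'
      linarith
  · rintro ⟨h1, h2⟩
    exact (key y).2.2 h1 h2

end Aux

/-- For the splitting automaton on `ℤ^d` with background `1 - 1/(2d) ≤ h < 1` and
initial mass `n ≥ 1`, for every `t ≥ 1` the set of sites that split at least once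
up to time `t` is the lattice diamond of radius `t - 1`, and together with its
boundary it is the lattice diamond of radius `t`. -/
theorem diamond_exact {d : ℕ} (hd : 1 ≤ d) {n h : ℝ}
    (hh1 : 1 - 1 / (2 * (d : ℝ)) ≤ h) (hh2 : h < 1) (hn : 1 ≤ n)
    (M : SplittingModel d n h) (hM : M.Parallel) (t : ℕ) (ht : 1 ≤ t) :
    M.Tt t = {x : Fin d → ℤ | (∑ i, |x i|) ≤ (t : ℤ) - 1} ∧
      M.Tt t ∪ latticeBdry (M.Tt t) = {x : Fin d → ℤ | (∑ i, |x i|) ≤ (t : ℤ)} := by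
  have hS := mem_S_iff hd hh1 hh2 hn M hM
  have hTt : M.Tt t = {x : Fin d → ℤ | nrm x ≤ (t : ℤ) - 1} := by
    ext x
    simp only [SplittingModel.Tt, Set.mem_iUnion, Set.mem_Icc, Set.mem_setOf_eq,
      exists_prop]
    constructor
    · rintro ⟨t', ⟨ht1, ht2⟩, hx⟩
      obtain ⟨s, rfl⟩ : ∃ s, t' = s + 1 := ⟨t' - 1, by omega⟩
      have := ((hS s x).mp hx).1
      omega
    · intro hx
      have hx' : nrm x ≤ (t : ℤ) - 1 := hx
      set s := (nrm x).toNat with hs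
      have hsn : (s : ℤ) = nrm x := Int.toNat_of_nonneg (nrm_nonneg x)
      refine ⟨s + 1, ⟨by omega, by omega⟩, ?_⟩
      exact (hS s x).mpr ⟨by omega, ⟨nrm x, by omega⟩⟩
  constructor
  · exact hTt
  · ext x
    simp only [Set.mem_union, Set.mem_setOf_eq]
    constructor
    · rintro (hx | ⟨hnx, y, hy, hadj⟩)
      · rw [hTt] at hx
        have : nrm x ≤ (t : ℤ) - 1 := hx
        show nrm x ≤ (t : ℤ)
        omega
      · rw [hTt] at hy
        have h1 : nrm y ≤ (t : ℤ) - 1 := hy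
        have h2 := nrm_le_adj hadj
        show nrm x ≤ (t : ℤ)
        omega
    · intro hx
      have hx' : nrm x ≤ (t : ℤ) := hx
      by_cases hb : nrm x ≤ (t : ℤ) - 1
      · left
        rw [hTt]
        exact hb
      · right
        have hxe : nrm x = (t : ℤ) := by omega
        have htZ : (1 : ℤ) ≤ (t : ℤ) := by exact_mod_cast ht
        refine ⟨?_, ?_⟩
        · rw [hTt]
          intro hc
          have : nrm x ≤ (t : ℤ) - 1 := hc
          omega
        · obtain ⟨i, ε, hε, hdown⟩ := exists_down x (by omega)
          exact ⟨nbr x i ε, by rw [hTt]; show nrm _ ≤ (t : ℤ) - 1; omega,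
            adj_nbr x i hε⟩
end

section
/- Consider the splitting model on Z^d (d ≥ 1) with any valid splitting order, background 1 − 1/(2d) ≤ h < 1 and initial mass n ≥ 1. Then the set T of sites that split at least once is infinite. (In particular, T cannot be a finite nonempty set: any site outside a finite nonempty T adjacent to T would receive mass at least 1/(2d), hence become unstable and have to split.) -/
open scoped BigOperators

namespace SplittingModel
variable {d : ℕ} {n h : ℝ}

lemma ind_nonneg (M : SplittingModel d n h) (t : ℕ) (z : Fin d → ℤ) :
    0 ≤ (M.S (t + 1)).indicator (M.η t) z := by
  by_cases hz : z ∈ M.S (t + 1)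
  · rw [Set.indicator_of_mem hz]
    exact le_trans zero_le_one (M.S_subset t hz)
  · rw [Set.indicator_of_notMem hz]

lemma sum_nonneg' (M : SplittingModel d n h) (t : ℕ) (y : Fin d → ℤ) :
    0 ≤ ∑ i : Fin d, ((M.S (t + 1)).indicator (M.η t) (nbr y i 1)
      + (M.S (t + 1)).indicator (M.η t) (nbr y i (-1))) :=
  Finset.sum_nonneg fun i _ => add_nonneg (M.ind_nonneg t _) (M.ind_nonneg t _)

lemma step_le (M : SplittingModel d n h) (t : ℕ) {y : Fin d → ℤ}
    (hy : y ∉ M.S (t + 1)) : M.η t y ≤ M.η (t + 1) y := by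
  rw [M.evolve t y, Set.indicator_of_mem (by exact hy : y ∈ (M.S (t+1))ᶜ)]
  have : (0:ℝ) ≤ 1 / (2 * (d : ℝ)) := by positivity
  nlinarith [M.sum_nonneg' t y]

lemma bg_le (M : SplittingModel d n h) {y : Fin d → ℤ} (hyT : y ∉ M.T)
    (hy0 : y ≠ 0) : ∀ t, h ≤ M.η t y := by
  intro t
  induction t with
  | zero => rw [M.init_other y hy0]
  | succ t ih =>
    refine le_trans ih (M.step_le t fun hmem => hyT ?_)
    exact Set.mem_iUnion.2 ⟨t + 1, hmem⟩

end SplittingModel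

/-- For the splitting model on `ℤ^d` with any valid splitting order, background
`1 - 1/(2d) ≤ h < 1` and initial mass `n ≥ 1`, the set `T` of sites that split at
least once is infinite. -/
theorem T_infinite {d : ℕ} (hd : 1 ≤ d) {n h : ℝ}
    (hh1 : 1 - 1 / (2 * (d : ℝ)) ≤ h) (hh2 : h < 1) (hn : 1 ≤ n)
    (M : SplittingModel d n h) (hM : M.Valid) :
    M.T.Infinite := by
  by_contra hfin
  rw [Set.not_infinite] at hfin
  have hdpos : (0:ℝ) < (d:ℝ) := by exact_mod_cast hd
  have h0 : (0 : Fin d → ℤ) ∈ M.T := by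
    obtain ⟨t₀, _, hmem⟩ := hM.2 0 0 (by rw [M.init_origin]; exact hn)
    exact Set.mem_iUnion.2 ⟨0 + t₀, hmem⟩
  set i₀ : Fin d := ⟨0, hd⟩ with hi₀
  obtain ⟨x, hxT, hxmax⟩ :=
    Set.Finite.exists_maximalFor (fun z => z i₀) _ hfin ⟨0, h0⟩
  set y := nbr x i₀ 1 with hy
  have hyi : y i₀ = x i₀ + 1 := by simp [hy, nbr]
  have hyT : y ∉ M.T := by
    intro hmem
    have : y i₀ ≤ x i₀ := hxmax hmem (show x i₀ ≤ y i₀ by omega)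
    omega
  have hy0 : y ≠ 0 := fun hzero => hyT (hzero ▸ h0)
  have hxy : nbr y i₀ (-1) = x := by
    funext j
    by_cases hj : j = i₀
    · subst hj; simp [nbr, hyi]
    · simp [nbr, hy, Function.update_of_ne hj]
  obtain ⟨t', hxS⟩ := Set.mem_iUnion.1 hxT
  obtain ⟨t, rfl⟩ : ∃ t, t' = t + 1 := by
    cases t' with
    | zero => rw [M.S_zero] at hxS; exact absurd hxS (Set.notMem_empty x)
    | succ t => exact ⟨t, rfl⟩
  have hynS : y ∉ M.S (t + 1) := fun hmem => hyT (Set.mem_iUnion.2 ⟨t + 1, hmem⟩)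
  have hmass : 1 ≤ M.η (t + 1) y := by
    rw [M.evolve t y, Set.indicator_of_mem (by exact hynS : y ∈ (M.S (t+1))ᶜ)]
    have hsum : (1:ℝ) ≤ ∑ i : Fin d, ((M.S (t + 1)).indicator (M.η t) (nbr y i 1)
        + (M.S (t + 1)).indicator (M.η t) (nbr y i (-1))) := by
      have h1 : (1:ℝ) ≤ (M.S (t + 1)).indicator (M.η t) (nbr y i₀ 1)
          + (M.S (t + 1)).indicator (M.η t) (nbr y i₀ (-1)) := by
        have hx1 : (1:ℝ) ≤ (M.S (t + 1)).indicator (M.η t) (nbr y i₀ (-1)) := by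
          rw [hxy, Set.indicator_of_mem hxS]
          exact M.S_subset t hxS
        linarith [M.ind_nonneg t (nbr y i₀ 1)]
      calc (1:ℝ) ≤ _ := h1
        _ ≤ _ := Finset.single_le_sum
            (f := fun i => (M.S (t + 1)).indicator (M.η t) (nbr y i 1)
              + (M.S (t + 1)).indicator (M.η t) (nbr y i (-1)))
            (fun i _ => add_nonneg (M.ind_nonneg t _) (M.ind_nonneg t _))
            (Finset.mem_univ i₀)
    have hη : h ≤ M.η t y := M.bg_le hyT hy0 t
    have hc : 1 / (2 * (d:ℝ)) * 1 ≤ 1 / (2 * (d:ℝ)) *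
        (∑ i : Fin d, ((M.S (t + 1)).indicator (M.η t) (nbr y i 1)
          + (M.S (t + 1)).indicator (M.η t) (nbr y i (-1)))) :=
      mul_le_mul_of_nonneg_left hsum (by positivity)
    nlinarith
  obtain ⟨t₀, _, hmem⟩ := hM.2 (t + 1) y hmass
  exact hyT (Set.mem_iUnion.2 ⟨t + 1 + t₀, hmem⟩)
end

section
/- The splitting automaton is not monotone in the initial mass n: on Z (d = 1) with background h = 23/64, the splitting automaton started from η_n^h with n = 165/32 stabilizes with T = {−5, −4, …, 4, 5}, whereas started with n = 167/32 it stabilizes with T = {−4, −3, …, 3, 4}. In particular, increasing n can strictly decrease the set T of sites that split at least once. -/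
open scoped BigOperators

/-- One parallel step of the 1-d splitting automaton on `ℤ → ℝ`. -/
noncomputable def rstep (f : ℤ → ℝ) : ℤ → ℝ := fun z =>
  (if 1 ≤ f z then 0 else f z)
    + (1/2) * ((if 1 ≤ f (z+1) then f (z+1) else 0) + (if 1 ≤ f (z-1) then f (z-1) else 0))

/-- Integer-numerator configuration: list `L` on window `[-B, ...]`, background `bg`. -/
def cfgZ (L : List ℤ) (bg : ℤ) (B : ℕ) (z : ℤ) : ℤ :=
  if 0 ≤ z + B then L.getD (z + B).toNat bg else bg

noncomputable def cfg (L : List ℤ) (bg D : ℤ) (B : ℕ) : ℤ → ℝ :=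
  fun z => (cfgZ L bg B z : ℝ) / (D : ℝ)

/-- One step on the integer level; denominators double. -/
def stepL (L : List ℤ) (bg D : ℤ) : List ℤ :=
  (List.range (L.length + 2)).map fun j =>
    2 * (if D ≤ ([bg,bg] ++ L ++ [bg,bg]).getD (j+1) bg then 0
         else ([bg,bg] ++ L ++ [bg,bg]).getD (j+1) bg)
      + (if D ≤ ([bg,bg] ++ L ++ [bg,bg]).getD j bg then ([bg,bg] ++ L ++ [bg,bg]).getD j bg else 0)
      + (if D ≤ ([bg,bg] ++ L ++ [bg,bg]).getD (j+2) bg then ([bg,bg] ++ L ++ [bg,bg]).getD (j+2) bg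
         else 0)

lemma length_stepL (L : List ℤ) (bg D : ℤ) : (stepL L bg D).length = L.length + 2 := by
  simp [stepL]

lemma cfgZ_bg (L : List ℤ) (bg : ℤ) (B : ℕ) (z : ℤ)
    (h : z + B < 0 ∨ (L.length : ℤ) ≤ z + B) : cfgZ L bg B z = bg := by
  unfold cfgZ
  rcases h with h | h
  · rw [if_neg (by omega)]
  · rw [if_pos (by omega)]
    exact List.getD_eq_default _ _ (by omega)

lemma cfgZ_cases (L : List ℤ) (bg : ℤ) (B : ℕ) (z : ℤ) :
    cfgZ L bg B z = bg ∨ cfgZ L bg B z ∈ L := by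
  unfold cfgZ
  split
  · rcases lt_or_ge (z + B).toNat L.length with h | h
    · right
      rw [List.getD_eq_getElem _ _ h]
      exact List.getElem_mem h
    · left; exact List.getD_eq_default _ _ h
  · left; rfl

lemma padget (L : List ℤ) (bg : ℤ) (B : ℕ) (z : ℤ) :
    ([bg,bg] ++ L ++ [bg,bg]).getD (z + (B+2)).toNat bg = cfgZ L bg B z := by
  have hl : ([bg,bg] ++ L ++ [bg,bg] : List ℤ) = bg :: bg :: (L ++ [bg,bg]) := by simp
  rcases le_or_gt 0 (z + (B:ℤ)) with h0 | h0
  · have ht : (z + ((B:ℤ)+2)).toNat = (z + B).toNat + 1 + 1 := by omega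
    rw [hl, ht, List.getD_cons_succ, List.getD_cons_succ]
    rcases lt_or_ge (z + B).toNat L.length with h | h
    · rw [cfgZ, if_pos h0]
      simp [List.getD, List.getElem?_append_left h]
    · rw [cfgZ, if_pos h0, List.getD_eq_default _ _ h]
      rw [show (L ++ [bg,bg] : List ℤ).getD (z+B).toNat bg
            = ([bg,bg] : List ℤ).getD ((z+B).toNat - L.length) bg from by
        simp [List.getD, List.getElem?_append_right h]]
      rcases Nat.lt_or_ge ((z+B).toNat - L.length) 2 with h2 | h2
      · interval_cases h' : ((z+B).toNat - L.length) <;> rfl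
      · exact List.getD_eq_default _ _ (by simpa using h2)
  · rw [cfgZ_bg _ _ _ _ (Or.inl h0)]
    have h2 : (z + ((B:ℤ)+2)).toNat = 0 ∨ (z + ((B:ℤ)+2)).toNat = 1 := by omega
    rcases h2 with h2 | h2 <;> rw [hl, h2] <;> rfl

lemma cfg_step (L : List ℤ) (bg D : ℤ) (B : ℕ) (hD : 0 < D) (hbg : bg < D) :
    rstep (cfg L bg D B) = cfg (stepL L bg D) (2*bg) (2*D) (B+1) := by
  have hDR : (0:ℝ) < (D:ℝ) := by exact_mod_cast hD
  funext z
  have key : cfgZ (stepL L bg D) (2*bg) (B+1) z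
      = 2*(if D ≤ cfgZ L bg B z then 0 else cfgZ L bg B z)
        + (if D ≤ cfgZ L bg B (z-1) then cfgZ L bg B (z-1) else 0)
        + (if D ≤ cfgZ L bg B (z+1) then cfgZ L bg B (z+1) else 0) := by
    rcases lt_or_ge (z + ((B:ℤ)+1)) 0 with hneg | hpos
    · rw [cfgZ, if_neg (by push_cast; omega),
        cfgZ_bg _ _ _ _ (Or.inl (by omega)), cfgZ_bg _ _ _ _ (Or.inl (by omega)),
        cfgZ_bg _ _ _ _ (Or.inl (by omega))]
      simp only [if_neg (not_le.2 hbg)]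
      ring
    · set j := (z + ((B:ℤ)+1)).toNat with hj
      have hjz : (j : ℤ) = z + B + 1 := by omega
      rcases lt_or_ge j (L.length + 2) with hin | hout
      · have hcf : cfgZ (stepL L bg D) (2*bg) (B+1) z = (stepL L bg D).getD j (2*bg) := by
          rw [cfgZ, if_pos (by push_cast; omega)]
          rw [show (z + ((B+1:ℕ):ℤ)).toNat = j from by omega]
        rw [hcf]
        have hget : (stepL L bg D).getD j (2*bg)
            = 2 * (if D ≤ ([bg,bg] ++ L ++ [bg,bg]).getD (j+1) bg then 0
                   else ([bg,bg] ++ L ++ [bg,bg]).getD (j+1) bg)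
              + (if D ≤ ([bg,bg] ++ L ++ [bg,bg]).getD j bg
                 then ([bg,bg] ++ L ++ [bg,bg]).getD j bg else 0)
              + (if D ≤ ([bg,bg] ++ L ++ [bg,bg]).getD (j+2) bg
                 then ([bg,bg] ++ L ++ [bg,bg]).getD (j+2) bg else 0) := by
          unfold stepL
          rw [List.getD_eq_getElem?_getD, List.getElem?_map, List.getElem?_range hin]
          rfl
        rw [hget,
          show j + 2 = ((z+1) + ((B:ℤ)+2)).toNat from by omega,
          show j + 1 = (z + ((B:ℤ)+2)).toNat from by omega,
          show j = ((z-1) + ((B:ℤ)+2)).toNat from by omega,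
          padget, padget, padget]
      · rw [cfgZ, if_pos (by push_cast; omega),
          show (z + ((B+1:ℕ):ℤ)).toNat = j from by omega,
          List.getD_eq_default _ _ (by rw [length_stepL]; omega),
          cfgZ_bg _ _ _ _ (Or.inr (by omega)), cfgZ_bg _ _ _ _ (Or.inr (by omega)),
          cfgZ_bg _ _ _ _ (Or.inr (by omega))]
        simp only [if_neg (not_le.2 hbg)]
        ring
  have hiff : ∀ v : ℤ, (1 ≤ (v:ℝ)/(D:ℝ)) ↔ D ≤ v := by
    intro v
    rw [le_div_iff₀ hDR, one_mul, Int.cast_le]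
  show (if 1 ≤ cfg L bg D B z then 0 else cfg L bg D B z)
      + (1/2) * ((if 1 ≤ cfg L bg D B (z+1) then cfg L bg D B (z+1) else 0)
        + (if 1 ≤ cfg L bg D B (z-1) then cfg L bg D B (z-1) else 0))
      = cfg (stepL L bg D) (2*bg) (2*D) (B+1) z
  simp only [cfg, key, hiff]
  have h2D : ((2*D : ℤ) : ℝ) ≠ 0 := by exact_mod_cast (by omega : (2*D : ℤ) ≠ 0)
  have hDne : (D:ℝ) ≠ 0 := ne_of_gt hDR
  split_ifs <;> push_cast <;> field_simp <;> ring

noncomputable def g0 (n h : ℝ) : ℤ → ℝ := fun z => if z = 0 then n else h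

lemma eta_eq {n h : ℝ} (M : SplittingModel 1 n h) (hP : M.Parallel) :
    ∀ (t : ℕ) (x : Fin 1 → ℤ), M.η t x = rstep^[t] (g0 n h) (x 0) := by
  intro t
  induction t with
  | zero =>
    intro x
    simp only [Function.iterate_zero, id_eq, g0]
    by_cases hx : x 0 = 0
    · rw [if_pos hx]
      have hx0 : x = 0 := funext fun i => by rw [Subsingleton.elim i 0]; exact hx
      rw [hx0, M.init_origin]
    · rw [if_neg hx]
      exact M.init_other x fun h0 => hx (by rw [h0]; rfl)
  | succ t ih =>
    intro x
    rw [M.evolve t x, hP t, Function.iterate_succ_apply']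
    classical
    have mem1 : ∀ y : Fin 1 → ℤ,
        (y ∈ {x | 1 ≤ M.η t x}) = (1 ≤ rstep^[t] (g0 n h) (y 0)) := fun y => by
      rw [Set.mem_setOf_eq, ih y]
    have n1 : ∀ i j : Fin 1, (nbr x i 1) j = x j + 1 := by
      intro i j; rw [Subsingleton.elim j i]; simp [nbr]
    have n2 : ∀ i j : Fin 1, (nbr x i (-1)) j = x j - 1 := by
      intro i j; rw [Subsingleton.elim j i]; simp [nbr, sub_eq_add_neg]
    rw [Fin.sum_univ_one, Set.indicator_apply, Set.indicator_apply, Set.indicator_apply]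
    simp only [Set.mem_compl_iff, Set.mem_setOf_eq, ih, n1, n2]
    show (if ¬1 ≤ rstep^[t] (g0 n h) (x 0) then rstep^[t] (g0 n h) (x 0) else 0)
        + 1 / (2 * ((1:ℕ):ℝ)) * _ = _
    rw [ite_not]
    show _ = rstep (rstep^[t] (g0 n h)) (x 0)
    unfold rstep
    norm_num

lemma main_core (n : ℝ) (n0 : ℤ) (hn : n = (n0:ℝ)/64) (Ls : ℕ → List ℤ)
    (h0 : Ls 0 = [n0])
    (hstep : ∀ t, Ls (t+1) = stepL (Ls t) (23*2^t) (64*2^t))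
    (tS : ℕ) (R : ℕ)
    (hfin : ∀ v ∈ Ls tS, v < 64*2^tS)
    (hin : ∀ t, t < tS → ∀ j, j < 2*t+1 → R < (((j:ℤ) - t).natAbs) → (Ls t).getD j 0 < 64*2^t)
    (hwit : ∀ z : ℤ, z.natAbs ≤ R → ∃ t, t < tS ∧ 64*2^t ≤ cfgZ (Ls t) (23*2^t) t z)
    (M : SplittingModel 1 n (23/64)) (hP : M.Parallel) :
    M.Stabilizes ∧ M.T = {x : Fin 1 → ℤ | (x 0).natAbs ≤ R} := by
  have hlen : ∀ t, (Ls t).length = 2*t+1 := by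
    intro t
    induction t with
    | zero => rw [h0]; rfl
    | succ t ih => rw [hstep, length_stepL, ih]; omega
  have hDpos : ∀ t : ℕ, (0:ℤ) < 64*2^t := fun t => by positivity
  have hbgD : ∀ t : ℕ, (23*2^t : ℤ) < 64*2^t := fun t =>
    mul_lt_mul_of_pos_right (by norm_num) (pow_pos (by norm_num) t)
  have hiter : ∀ t, rstep^[t] (g0 n (23/64)) = cfg (Ls t) (23*2^t) (64*2^t) t := by
    intro t
    induction t with
    | zero =>
      funext z
      rw [Function.iterate_zero, id_eq, pow_zero, mul_one, mul_one, h0]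
      unfold g0 cfg cfgZ
      rcases lt_trichotomy z 0 with hz | hz | hz
      · rw [if_neg (by omega), if_neg (by push_cast; omega)]
        norm_num
      · subst hz
        norm_num [List.getD, hn]
      · rw [if_neg (by omega), if_pos (by push_cast; omega)]
        rw [List.getD_eq_default _ _ (by simp; omega)]
        norm_num
    | succ t ih =>
      rw [Function.iterate_succ_apply', ih, cfg_step _ _ _ _ (hDpos t) (hbgD t), hstep,
        show (2*(23*2^t) : ℤ) = 23*2^(t+1) from by ring,
        show (2*(64*2^t) : ℤ) = 64*2^(t+1) from by ring]
  have hunst : ∀ (t : ℕ) (x : Fin 1 → ℤ),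
      (1 ≤ M.η t x) ↔ (64*2^t : ℤ) ≤ cfgZ (Ls t) (23*2^t) t (x 0) := by
    intro t x
    rw [eta_eq M hP t x, hiter t]
    unfold cfg
    rw [le_div_iff₀ (by exact_mod_cast hDpos t), one_mul, Int.cast_le]
  have hstab0 : ∀ x : Fin 1 → ℤ, ¬ 1 ≤ M.η tS x := by
    intro x hx
    rw [hunst] at hx
    rcases cfgZ_cases (Ls tS) (23*2^tS) tS (x 0) with hc | hc
    · rw [hc] at hx; exact absurd hx (not_le.2 (hbgD tS))
    · exact absurd hx (not_le.2 (hfin _ hc))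
  have hSem : ∀ k, M.S (tS + 1 + k) = ∅ ∧ ∀ x, M.η (tS + k) x = M.η tS x := by
    intro k
    induction k with
    | zero =>
      refine ⟨?_, fun x => rfl⟩
      rw [show tS + 1 + 0 = tS + 1 from rfl, hP]
      ext x
      simp only [Set.mem_setOf_eq, Set.mem_empty_iff_false, iff_false]
      exact hstab0 x
    | succ k ih =>
      obtain ⟨hS, hη⟩ := ih
      have hη' : ∀ x, M.η (tS + (k+1)) x = M.η tS x := by
        intro x
        rw [show tS + (k+1) = (tS + k) + 1 from rfl, M.evolve,
          show (tS + k) + 1 = tS + 1 + k from by omega, hS]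
        simp only [Set.indicator_empty, Set.compl_empty, Set.indicator_univ,
          Pi.zero_apply, add_zero, Fin.sum_univ_one]
        rw [hη x]
        ring
      refine ⟨?_, hη'⟩
      rw [show tS + 1 + (k+1) = (tS + (k+1)) + 1 from by omega, hP]
      ext x
      simp only [Set.mem_setOf_eq, Set.mem_empty_iff_false, iff_false]
      rw [hη' x]
      exact hstab0 x
  have hSem' : ∀ u, tS + 1 ≤ u → M.S u = ∅ := by
    intro u hu
    have := (hSem (u - (tS+1))).1
    rwa [show tS + 1 + (u - (tS+1)) = u from by omega] at this
  constructor
  · intro x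
    refine Set.Finite.subset (Set.finite_Iio (tS+1)) ?_
    intro u hu
    rw [Set.mem_Iio]
    by_contra hlt
    rw [not_lt] at hlt
    rw [Set.mem_setOf_eq, hSem' u hlt] at hu
    exact hu
  · ext x
    simp only [SplittingModel.T, Set.mem_iUnion, Set.mem_setOf_eq]
    constructor
    · rintro ⟨u, hu⟩
      cases u with
      | zero => rw [M.S_zero] at hu; exact absurd hu (Set.notMem_empty x)
      | succ t =>
        by_cases ht : t < tS
        · rw [hP t] at hu
          have hu' : (64*2^t : ℤ) ≤ cfgZ (Ls t) (23*2^t) t (x 0) := (hunst t x).1 hu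
          by_contra hR
          rw [not_le] at hR
          rcases lt_or_ge (x 0 + (t:ℤ)) 0 with hz | hz
          · rw [cfgZ_bg _ _ _ _ (Or.inl hz)] at hu'
            exact absurd hu' (not_le.2 (hbgD t))
          rcases le_or_gt ((Ls t).length : ℤ) (x 0 + t) with hz2 | hz2
          · rw [cfgZ_bg _ _ _ _ (Or.inr hz2)] at hu'
            exact absurd hu' (not_le.2 (hbgD t))
          · rw [hlen t] at hz2
            have hj : (x 0 + (t:ℤ)).toNat < 2*t+1 := by omega
            have hcz : cfgZ (Ls t) (23*2^t) t (x 0)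
                = (Ls t).getD (x 0 + (t:ℤ)).toNat 0 := by
              rw [cfgZ, if_pos hz, List.getD_eq_getElem _ _ (by rw [hlen t]; omega),
                List.getD_eq_getElem _ _ (by rw [hlen t]; omega)]
            rw [hcz] at hu'
            exact absurd hu' (not_le.2 (hin t ht _ hj (by omega)))
        · rw [hSem' (t+1) (by omega)] at hu
          exact absurd hu (Set.notMem_empty x)
    · intro hxR
      obtain ⟨t, htS, hge⟩ := hwit (x 0) hxR
      exact ⟨t+1, by rw [hP t]; exact (hunst t x).2 hge⟩

def Lseq1 : ℕ → List ℤ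
  | 0 => [330]
  | (t+1) => stepL (Lseq1 t) (23*2^t) (64*2^t)

def Lseq2 : ℕ → List ℤ
  | 0 => [334]
  | (t+1) => stepL (Lseq2 t) (23*2^t) (64*2^t)

set_option maxRecDepth 10000 in
lemma hfin1 : ∀ v ∈ Lseq1 15, v < 64*2^15 := by decide

set_option maxRecDepth 10000 in
lemma hin1 : ∀ t ∈ Finset.range 15, ∀ j ∈ Finset.range (2*t+1),
    5 < (((j:ℤ) - t).natAbs) → (Lseq1 t).getD j 0 < 64*2^t := by decide

set_option maxRecDepth 10000 in
lemma hwit1 : ∀ z : ℤ, z.natAbs ≤ 5 →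
    ∃ t, t < 15 ∧ (64*2^t : ℤ) ≤ cfgZ (Lseq1 t) (23*2^t) t z := by
  intro z hz
  have hb : -5 ≤ z ∧ z ≤ 5 := by omega
  obtain ⟨hb1, hb2⟩ := hb
  interval_cases z
  · exact ⟨9, by norm_num, by decide⟩
  · exact ⟨8, by norm_num, by decide⟩
  · exact ⟨3, by norm_num, by decide⟩
  · exact ⟨2, by norm_num, by decide⟩
  · exact ⟨1, by norm_num, by decide⟩
  · exact ⟨0, by norm_num, by decide⟩
  · exact ⟨1, by norm_num, by decide⟩
  · exact ⟨2, by norm_num, by decide⟩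
  · exact ⟨3, by norm_num, by decide⟩
  · exact ⟨8, by norm_num, by decide⟩
  · exact ⟨9, by norm_num, by decide⟩

set_option maxRecDepth 10000 in
lemma hfin2 : ∀ v ∈ Lseq2 9, v < 64*2^9 := by decide

set_option maxRecDepth 10000 in
lemma hin2 : ∀ t ∈ Finset.range 9, ∀ j ∈ Finset.range (2*t+1),
    4 < (((j:ℤ) - t).natAbs) → (Lseq2 t).getD j 0 < 64*2^t := by decide

set_option maxRecDepth 10000 in
lemma hwit2 : ∀ z : ℤ, z.natAbs ≤ 4 →
    ∃ t, t < 9 ∧ (64*2^t : ℤ) ≤ cfgZ (Lseq2 t) (23*2^t) t z := by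
  intro z hz
  have hb1 : -4 ≤ z := by omega
  have hb2 : z ≤ 4 := by omega
  interval_cases z
  · exact ⟨4, by norm_num, by decide⟩
  · exact ⟨3, by norm_num, by decide⟩
  · exact ⟨2, by norm_num, by decide⟩
  · exact ⟨1, by norm_num, by decide⟩
  · exact ⟨0, by norm_num, by decide⟩
  · exact ⟨1, by norm_num, by decide⟩
  · exact ⟨2, by norm_num, by decide⟩
  · exact ⟨3, by norm_num, by decide⟩
  · exact ⟨4, by norm_num, by decide⟩



/-- Non-monotonicity in `n` of the splitting automaton on `ℤ` with `h = 23/64`: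
with `n = 165/32` it stabilizes with `T = {-5, …, 5}`, whereas with the larger mass
`n = 167/32` it stabilizes with the strictly smaller set `T = {-4, …, 4}`. -/
theorem not_monotone_in_n
    (M₁ : SplittingModel 1 (165 / 32) (23 / 64)) (h₁ : M₁.Parallel)
    (M₂ : SplittingModel 1 (167 / 32) (23 / 64)) (h₂ : M₂.Parallel) :
    M₁.Stabilizes ∧ M₁.T = {x : Fin 1 → ℤ | |x 0| ≤ 5} ∧
      M₂.Stabilizes ∧ M₂.T = {x : Fin 1 → ℤ | |x 0| ≤ 4} ∧
      M₂.T ⊂ M₁.T := by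

  obtain ⟨hs1, hT1⟩ := main_core (165/32) 330 (by norm_num) Lseq1 rfl (fun t => rfl) 15 5
    hfin1 (fun t ht j hj => hin1 t (Finset.mem_range.2 ht) j (Finset.mem_range.2 hj))
    hwit1 M₁ h₁
  obtain ⟨hs2, hT2⟩ := main_core (167/32) 334 (by norm_num) Lseq2 rfl (fun t => rfl) 9 4
    hfin2 (fun t ht j hj => hin2 t (Finset.mem_range.2 ht) j (Finset.mem_range.2 hj))
    hwit2 M₂ h₂
  have e1 : {x : Fin 1 → ℤ | (x 0).natAbs ≤ 5} = {x : Fin 1 → ℤ | |x 0| ≤ 5} := by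
    ext x; simp only [Set.mem_setOf_eq]; rw [Int.abs_eq_natAbs]; omega
  have e2 : {x : Fin 1 → ℤ | (x 0).natAbs ≤ 4} = {x : Fin 1 → ℤ | |x 0| ≤ 4} := by
    ext x; simp only [Set.mem_setOf_eq]; rw [Int.abs_eq_natAbs]; omega
  rw [e1] at hT1
  rw [e2] at hT2
  refine ⟨hs1, hT1, hs2, hT2, ?_⟩
  rw [hT1, hT2]
  have hsub : {x : Fin 1 → ℤ | |x 0| ≤ 4} ⊆ {x : Fin 1 → ℤ | |x 0| ≤ 5} := by
    intro x hx
    simp only [Set.mem_setOf_eq] at *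
    exact hx.trans (by norm_num)
  refine (Set.ssubset_iff_of_subset hsub).2 ⟨fun _ => 5, ?_, ?_⟩
  · simp only [Set.mem_setOf_eq]; norm_num
  · simp only [Set.mem_setOf_eq]; norm_num
end
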